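/- Let G be a simple graph with maximum degree Δ, let u be a vertex of G of degree 1 with unique neighbor v, and suppose G − u admits a (Δ+2, 2)-incidence coloring. Then G admits a (Δ+2, 2)-incidence coloring. -/

import Mathlib

/-- An incidence of `G` is a pair `(v, vw)` with `G.Adj v w`, encoded as the ordered pair
`(v, w)`.  Two incidences `(v, vw)` and `(v', v'w')` are adjacent if `v = v'`, `w = v'`
or `v = w'`.  A `(k, l)`-incidence coloring is a proper coloring of the incidences with at
most `k` colors such that for every vertex `v` at most `l` colors appear on the incoming
incidences `(u, uv)`. -/
def IsIncColoring {V : Type*} (G : SimpleGraph V) (k l : ℕ) (c : V → V → Fin k) : Prop :=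
  (∀ v w v' w' : V, G.Adj v w → G.Adj v' w' → (v, w) ≠ (v', w') →
      (v = v' ∨ w = v' ∨ v = w') → c v w ≠ c v' w') ∧
  (∀ v : V, {x : Fin k | ∃ u, G.Adj u v ∧ c u v = x}.ncard ≤ l)

/-- `G` has a `(k, l)`-incidence coloring. -/
def HasIncColoring {V : Type*} (G : SimpleGraph V) (k l : ℕ) : Prop :=
  ∃ c : V → V → Fin k, IsIncColoring G k l c

/-- A graph is outerplanar iff it has a one-page book embedding: the vertices can be placed
(injectively) on a line so that no two edges interleave. -/
def Outerplanar {V : Type*} (G : SimpleGraph V) : Prop :=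
  ∃ f : V → ℝ, Function.Injective f ∧
    ∀ a b c d : V, G.Adj a b → G.Adj c d →
      ¬(f a < f c ∧ f c < f b ∧ f b < f d)

/-- If a vertex u has degree 1 with neighbor v and G - u has a (Δ+2,2)-incidence
coloring, then so does G. -/
theorem stmt_3 {V : Type*} [Fintype V] [DecidableEq V] (G : SimpleGraph V)
    [DecidableRel G.Adj] (u v : V) (hdeg : G.degree u = 1) (hadj : G.Adj u v)
    (h : HasIncColoring (G.induce {x | x ≠ u}) (G.maxDegree + 2) 2) :
    HasIncColoring G (G.maxDegree + 2) 2 := by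
  classical
  obtain ⟨c', hc'1, hc'2⟩ := h
  have hvu : v ≠ u := fun hv => G.loopless.irrefl u (hv ▸ hadj)
  have hdeg' : (G.neighborFinset u).card = 1 := hdeg
  have huniq : ∀ w, G.Adj u w → w = v := by
    intro w hw
    have h1 : w ∈ G.neighborFinset u := by simpa using hw
    have h2 : v ∈ G.neighborFinset u := by simpa using hadj
    exact Finset.card_le_one.mp hdeg'.le w h1 v h2
  have hΔ : 1 ≤ G.maxDegree := hdeg ▸ G.degree_le_maxDegree u
  -- extend c' to all of V
  set d : V → V → Fin (G.maxDegree + 2) :=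
    fun x y => if h : x ≠ u ∧ y ≠ u then c' ⟨x, h.1⟩ ⟨y, h.2⟩ else ⟨0, by omega⟩ with hddef
  have hd : ∀ x y (hx : x ≠ u) (hy : y ≠ u), d x y = c' ⟨x, hx⟩ ⟨y, hy⟩ := by
    intro x y hx hy; simp [hddef, hx, hy]
  have hd1 : ∀ a b a' b' : V, a ≠ u → b ≠ u → a' ≠ u → b' ≠ u →
      G.Adj a b → G.Adj a' b' → (a, b) ≠ (a', b') →
      (a = a' ∨ b = a' ∨ a = b') → d a b ≠ d a' b' := by
    intro a b a' b' ha hb ha' hb' h1 h2 hne hadjc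
    rw [hd a b ha hb, hd a' b' ha' hb']
    refine hc'1 ⟨a, ha⟩ ⟨b, hb⟩ ⟨a', ha'⟩ ⟨b', hb'⟩ h1 h2 ?_ ?_
    · intro hh
      apply hne
      have h1 : (⟨a, ha⟩ : {x | x ≠ u}) = ⟨a', ha'⟩ := congrArg Prod.fst hh
      have h2 : (⟨b, hb⟩ : {x | x ≠ u}) = ⟨b', hb'⟩ := congrArg Prod.snd hh
      exact Prod.ext (congrArg Subtype.val h1) (congrArg Subtype.val h2)
    · rcases hadjc with hh | hh | hh
      · exact Or.inl (Subtype.ext hh)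
      · exact Or.inr (Or.inl (Subtype.ext hh))
      · exact Or.inr (Or.inr (Subtype.ext hh))
  set InS : Set (Fin (G.maxDegree + 2)) :=
    {x | ∃ w, w ≠ u ∧ G.Adj w v ∧ d w v = x} with hInS
  set OutS : Set (Fin (G.maxDegree + 2)) :=
    {x | ∃ w, w ≠ u ∧ G.Adj v w ∧ d v w = x} with hOutS
  have hIO : ∀ x, x ∈ InS → x ∉ OutS := by
    rintro x ⟨w, hwne, hwv, rfl⟩ ⟨w', hw'ne, hvw', heq⟩
    exact hd1 w v v w' hwne hvu hvu hw'ne hwv hvw'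
      (fun hh => hwv.ne (congrArg Prod.fst hh)) (Or.inr (Or.inl rfl)) heq.symm
  have hIn2 : InS.ncard ≤ 2 := by
    refine le_trans (Set.ncard_le_ncard ?_ (Set.toFinite _)) (hc'2 ⟨v, hvu⟩)
    rintro x ⟨w, hwne, hwv, rfl⟩
    exact ⟨⟨w, hwne⟩, hwv, (hd w v hwne hvu).symm⟩
  have hOut : OutS.ncard < G.maxDegree := by
    have h1 : OutS ⊆ (fun w => d v w) '' ((G.neighborFinset v \ {u} : Finset V) : Set V) := by
      rintro x ⟨w, hwne, hvw, rfl⟩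
      exact ⟨w, by simp [hwne, hvw], rfl⟩
    have h2 : OutS.ncard ≤ (G.neighborFinset v \ {u}).card := by
      refine le_trans (Set.ncard_le_ncard h1 (Set.toFinite _)) ?_
      refine le_trans (Set.ncard_image_le (Set.toFinite _)) ?_
      rw [Set.ncard_coe_finset]
    have h3 : ({u} : Finset V) ⊆ G.neighborFinset v := by
      simp [hadj.symm]
    have h4 : (G.neighborFinset v \ {u}).card = G.degree v - 1 := by
      rw [Finset.card_sdiff_of_subset h3, Finset.card_singleton]; rfl
    have h5 : G.degree v ≤ G.maxDegree := G.degree_le_maxDegree v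
    have h6 : 1 ≤ G.degree v := by
      have : u ∈ G.neighborFinset v := by simpa using hadj.symm
      exact Finset.card_pos.mpr ⟨u, this⟩
    omega
  have hex : ∀ S : Set (Fin (G.maxDegree + 2)), S.ncard < G.maxDegree + 2 → ∃ x, x ∉ S := by
    intro S hS
    by_contra hc
    push_neg at hc
    have : S = Set.univ := Set.eq_univ_of_forall hc
    rw [this, Set.ncard_univ, Nat.card_eq_fintype_card, Fintype.card_fin] at hS
    omega
  -- choose α
  obtain ⟨α, hαOut, hαIn⟩ : ∃ α, α ∉ OutS ∧ (InS.Nonempty → α ∈ InS) := by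
    rcases em InS.Nonempty with hne | hne
    · exact ⟨hne.choose, hIO _ hne.choose_spec, fun _ => hne.choose_spec⟩
    · obtain ⟨α, hα⟩ := hex OutS (by omega)
      exact ⟨α, hα, fun hh => absurd hh hne⟩
  -- choose β
  obtain ⟨β, hβOut, hβIn, hβα⟩ : ∃ β, β ∉ OutS ∧ β ∉ InS ∧ β ≠ α := by
    rcases em InS.Nonempty with hne | hne
    · have hu : (OutS ∪ InS).ncard ≤ OutS.ncard + InS.ncard := Set.ncard_union_le _ _
      obtain ⟨β, hβ⟩ := hex (OutS ∪ InS) (by omega)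
      exact ⟨β, fun hh => hβ (Or.inl hh), fun hh => hβ (Or.inr hh),
        fun hh => hβ (Or.inr (hh ▸ hαIn hne))⟩
    · have hemp : InS = ∅ := Set.not_nonempty_iff_eq_empty.mp hne
      have hu : (insert α OutS).ncard ≤ OutS.ncard + 1 := Set.ncard_insert_le _ _
      obtain ⟨β, hβ⟩ := hex (insert α OutS) (by omega)
      exact ⟨β, fun hh => hβ (Set.mem_insert_of_mem _ hh), by simp [hemp],
        fun hh => hβ (hh ▸ Set.mem_insert _ _)⟩
  set c : V → V → Fin (G.maxDegree + 2) :=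
    fun x y => if x = u then α else if y = u then β else d x y with hcdef
  have hcu : ∀ y, c u y = α := fun y => by simp [hcdef]
  have hcb : ∀ x, x ≠ u → c x u = β := fun x hx => by simp [hcdef, hx]
  have hcd : ∀ x y, x ≠ u → y ≠ u → c x y = d x y := fun x y hx hy => by simp [hcdef, hx, hy]
  refine ⟨c, ?_, ?_⟩
  · -- properness
    intro a b a' b' hab hab' hne hadjc
    by_cases ha : a = u
    · subst a
      have hb : b = v := huniq b hab
      subst b
      rw [hcu]
      by_cases ha' : a' = u
      · subst a'
        have : b' = v := huniq b' hab'
        subst b'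
        exact absurd rfl hne
      · by_cases hb' : b' = u
        · subst b'
          rw [hcb a' ha']
          exact Ne.symm hβα
        · have ha'v : a' = v := by
            rcases hadjc with hh | hh | hh
            · exact absurd hh.symm ha'
            · exact hh.symm
            · exact absurd hh.symm hb'
          subst a'
          rw [hcd v b' ha' hb']
          intro hh
          exact hαOut ⟨b', hb', hab', hh.symm⟩
    · by_cases hb : b = u
      · subst b
        have hav : a = v := huniq a hab.symm
        subst a
        rw [hcb v ha]
        by_cases ha' : a' = u
        · subst a'
          rw [hcu]
          exact hβα
        · by_cases hb' : b' = u
          · subst b'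
            have : a' = v := huniq a' hab'.symm
            subst a'
            exact absurd rfl hne
          · rw [hcd a' b' ha' hb']
            rcases hadjc with hh | hh | hh
            · subst hh
              intro hh2
              exact hβOut ⟨b', hb', hab', hh2.symm⟩
            · exact absurd hh.symm ha'
            · subst hh
              intro hh2
              exact hβIn ⟨a', ha', hab', hh2.symm⟩
      · rw [hcd a b ha hb]
        by_cases ha' : a' = u
        · subst a'
          have : b' = v := huniq b' hab'
          subst b'
          rw [hcu]
          have hav : a = v := by
            rcases hadjc with hh | hh | hh
            · exact absurd hh ha
            · exact absurd hh hb
            · exact hh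
          rw [hav] at hab
          intro hh
          rw [hav] at hh
          exact hαOut ⟨b, hb, hab, hh⟩
        · by_cases hb' : b' = u
          · subst b'
            have ha'v : a' = v := huniq a' hab'.symm
            subst a'
            rw [hcb v ha']
            rcases hadjc with hh | hh | hh
            · intro hh2
              rw [hh] at hab hh2
              exact hβOut ⟨b, hb, hab, hh2⟩
            · intro hh2
              rw [hh] at hab hh2
              exact hβIn ⟨a, ha, hab, hh2⟩
            · exact absurd hh ha
          · rw [hcd a' b' ha' hb']
            exact hd1 a b a' b' ha hb ha' hb' hab hab' hne hadjc
  · -- at most 2 colors incoming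
    intro x
    by_cases hxu : x = u
    · subst x
      have hsub : {y | ∃ w, G.Adj w u ∧ c w u = y} ⊆ {β} := by
        rintro y ⟨w, hw, rfl⟩
        have hwne : w ≠ u := hw.ne
        rw [hcb w hwne]
        rfl
      refine le_trans (Set.ncard_le_ncard hsub (Set.toFinite _)) ?_
      simp
    · by_cases hxv : x = v
      · subst x
        have hsub : {y | ∃ w, G.Adj w v ∧ c w v = y} ⊆ insert α InS := by
          rintro y ⟨w, hw, rfl⟩
          by_cases hwu : w = u
          · subst w
            rw [hcu]
            exact Set.mem_insert _ _
          · rw [hcd w v hwu hvu]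
            exact Set.mem_insert_of_mem _ ⟨w, hwu, hw, rfl⟩
        rcases em InS.Nonempty with hne | hne
        · have heq : insert α InS = InS := Set.insert_eq_self.mpr (hαIn hne)
          rw [heq] at hsub
          exact le_trans (Set.ncard_le_ncard hsub (Set.toFinite _)) hIn2
        · have hemp : InS = ∅ := Set.not_nonempty_iff_eq_empty.mp hne
          rw [hemp] at hsub
          refine le_trans (Set.ncard_le_ncard hsub (Set.toFinite _)) ?_
          simp
      · have hsub : {y | ∃ w, G.Adj w x ∧ c w x = y} ⊆
            {y | ∃ w' : {z | z ≠ u}, (G.induce {z | z ≠ u}).Adj w' ⟨x, hxu⟩ ∧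
              c' w' ⟨x, hxu⟩ = y} := by
          rintro y ⟨w, hw, rfl⟩
          have hwu : w ≠ u := by
            intro hh
            subst hh
            exact hxv (huniq x hw)
          exact ⟨⟨w, hwu⟩, hw, by rw [hcd w x hwu hxu, hd w x hwu hxu]⟩
        exact le_trans (Set.ncard_le_ncard hsub (Set.toFinite _)) (hc'2 ⟨x, hxu⟩)
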